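/- Let n ≥ 2 be an even natural number and z ∈ ℂ with |z| < 1. Then ∫₀¹ z·(zt)^{n/2}·(1 − (zt)^n)^{−(n+2)/n} dt = (2/(n+2)) · ∑_{k=0}^∞ ((1+2/n)_k (1/2+1/n)_k)/((3/2+1/n)_k · k!) · z^{nk+n/2+1}, where (1 − (zt)^n)^{−(n+2)/n} is the principal-branch complex power. In other words, the third-coordinate function ψ of the minimal surface lift of the harmonic shear of the polygonal mapping φ(z) = ∫₀^z (1−ζ^n)^{−2/n} dζ with dilatation ω(z) = z^n = (z^{n/2})² is ψ(z) = (2 z^{(n+2)/2}/(n+2))·F(1+2/n, 1/2+1/n; 3/2+1/n; z^n). -/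

import Mathlib

open Filter FormalMultilinearSeries MeasureTheory
open scoped Topology

noncomputable def bc (c : ℂ) (k : ℕ) : ℂ :=
  Polynomial.eval c (ascPochhammer ℂ k) / (Nat.factorial k : ℂ)

lemma add_nat_ne_zero {u : ℂ} (hu : 0 < u.re) (k : ℕ) : u + (k : ℂ) ≠ 0 := by
  intro h
  have h2 := congrArg Complex.re h
  simp only [Complex.add_re, Complex.natCast_re, Complex.zero_re] at h2
  have : (0:ℝ) ≤ (k:ℝ) := Nat.cast_nonneg k
  linarith

lemma poch_ne_zero {u : ℂ} (hu : 0 < u.re) (k : ℕ) :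
    Polynomial.eval u (ascPochhammer ℂ k) ≠ 0 := by
  induction k with
  | zero => simp
  | succ k ih =>
    rw [ascPochhammer_succ_eval]
    exact mul_ne_zero ih (add_nat_ne_zero hu k)

lemma bc_ne_zero {c : ℂ} (hc : 0 < c.re) (k : ℕ) : bc c k ≠ 0 :=
  div_ne_zero (poch_ne_zero hc k) (Nat.cast_ne_zero.2 (Nat.factorial_ne_zero k))

lemma bc_rec (c : ℂ) (k : ℕ) : bc c (k + 1) * ((k : ℂ) + 1) = bc c k * (c + k) := by
  unfold bc
  rw [ascPochhammer_succ_eval, Nat.factorial_succ]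
  have hk : ((Nat.factorial k : ℂ)) ≠ 0 := Nat.cast_ne_zero.2 (Nat.factorial_ne_zero k)
  have hk1 : ((k : ℂ) + 1) ≠ 0 := Nat.cast_add_one_ne_zero k
  push_cast
  field_simp

lemma ratio_tendsto {c : ℂ} (hc : 0 < c.re) :
    Tendsto (fun k : ℕ => ‖bc c (k + 1)‖ / ‖bc c k‖) atTop (𝓝 1) := by
  have h3 : Tendsto (fun k : ℕ => (((k : ℂ) + 1)⁻¹)) atTop (𝓝 0) := by
    rw [tendsto_zero_iff_norm_tendsto_zero]
    have hnn : ∀ k : ℕ, ‖((k : ℂ) + 1)⁻¹‖ = ((k : ℝ) + 1)⁻¹ := by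
      intro k
      rw [norm_inv]
      congr 1
      have h4 : ((k : ℂ) + 1) = (((k : ℝ) + 1 : ℝ) : ℂ) := by push_cast; ring
      rw [h4, Complex.norm_real, Real.norm_eq_abs, abs_of_pos (by positivity)]
    have h5 : Tendsto (fun k : ℕ => ((k : ℝ) + 1)⁻¹) atTop (𝓝 0) := by
      have h6 : Tendsto (fun k : ℕ => (k : ℝ) + 1) atTop atTop :=
        tendsto_atTop_add_const_right atTop 1 tendsto_natCast_atTop_atTop
      exact h6.inv_tendsto_atTop
    exact h5.congr fun k => (hnn k).symm
  have h2 : Tendsto (fun k : ℕ => (c + k) / ((k : ℂ) + 1)) atTop (𝓝 1) := by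
    have heq : (fun k : ℕ => (c + k) / ((k : ℂ) + 1))
        = fun k : ℕ => 1 + (c - 1) * ((k : ℂ) + 1)⁻¹ := by
      funext k
      have hk1 : ((k : ℂ) + 1) ≠ 0 := Nat.cast_add_one_ne_zero k
      field_simp
      ring
    rw [heq]
    have := (tendsto_const_nhds (x := (1:ℂ))).add ((h3.const_mul (c - 1)))
    simpa using this
  have h1 : ∀ k : ℕ, ‖bc c (k + 1)‖ / ‖bc c k‖ = ‖(c + k) / ((k : ℂ) + 1)‖ := by
    intro k
    rw [← norm_div]
    congr 1
    have hb := bc_ne_zero hc k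
    have hk1 : ((k : ℂ) + 1) ≠ 0 := Nat.cast_add_one_ne_zero k
    rw [div_eq_div_iff hb hk1]
    linear_combination bc_rec c k
  have := h2.norm
  simp only [norm_one] at this
  exact this.congr fun k => (h1 k).symm

theorem hasSum_binom (c : ℂ) (hcre : 0 < c.re) {w : ℂ} (hw : ‖w‖ < 1) :
    HasSum (fun k : ℕ => bc c k * w ^ k) ((1 - w) ^ (-c)) := by
  set p := ofScalars ℂ (bc c) with hp
  set F := p.sum with hFdef
  have hrad : 1 ≤ p.radius := by
    have := inv_le_ofScalars_radius_of_tendsto ℂ (bc c) (r := 1) one_ne_zero (by simpa using ratio_tendsto hcre)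
    simpa using this
  have hFP : HasFPowerSeriesOnBall F p 0 1 :=
    (p.hasFPowerSeriesOnBall (lt_of_lt_of_le one_pos hrad)).mono one_pos hrad
  have hmem : ∀ y : ℂ, ‖y‖ < 1 → y ∈ Metric.eball (0 : ℂ) 1 := by
    intro y hy
    rw [Metric.mem_eball, edist_zero_right, ← ENNReal.coe_one, enorm_eq_nnnorm, ENNReal.coe_lt_coe,
      ← NNReal.coe_lt_coe]
    simpa using hy
  have hsum : ∀ y : ℂ, ‖y‖ < 1 → HasSum (fun k => bc c k * y ^ k) (F y) := by
    intro y hy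
    have h := hFP.hasSum (hmem y hy)
    simp only [zero_add] at h
    have he : (fun n => p n fun _ => y) = fun k => bc c k * y ^ k := by
      funext k
      rw [hp, ofScalars_apply_eq, smul_eq_mul]
    rwa [he] at h
  -- derivative hassum
  have hfder := hFP.fderiv
  have HS1 : ∀ y : ℂ, ‖y‖ < 1 →
      HasSum (fun k : ℕ => ((k : ℂ) + 1) * bc c (k + 1) * y ^ (k + 1)) (y * deriv F y) := by
    intro y hy
    have h := (hfder.hasSum (hmem y hy)).mapL (ContinuousLinearMap.apply ℂ ℂ y)
    simp only [zero_add, ContinuousLinearMap.apply_apply] at h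
    have hdiag : (fun n => (p.derivSeries n fun _ => y) y)
        = fun n : ℕ => ((n : ℂ) + 1) * bc c (n + 1) * y ^ (n + 1) := by
      funext n
      rw [derivSeries_apply_diag, hp, ofScalars_apply_eq]
      push_cast
      simp [smul_eq_mul]
      ring
    have hfapp : (fderiv ℂ F y) y = y * deriv F y := by
      rw [← fderiv_apply_one_eq_deriv, ← smul_eq_mul, ← ContinuousLinearMap.map_smul, smul_eq_mul, mul_one]
    rwa [hdiag, hfapp] at h
  have hderivsum : ∀ y : ℂ, ‖y‖ < 1 →
      HasSum (fun k : ℕ => ((k : ℂ) + 1) * bc c (k + 1) * y ^ k) (deriv F y) := by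
    intro y hy
    by_cases hy0 : y = 0
    · subst hy0
      have hd0 : deriv F 0 = bc c 1 := by
        rw [hFP.hasFPowerSeriesAt.deriv]
        have h5 := ofScalars_apply_eq (𝕜 := ℂ) (E := ℂ) (c := bc c) (1 : ℂ) 1
        simp only [smul_eq_mul, one_pow, mul_one] at h5
        exact h5
      rw [hd0]
      have h := hasSum_single (f := fun k : ℕ => ((k : ℂ) + 1) * bc c (k + 1) * (0 : ℂ) ^ k) 0
        (by intro b hb; simp [zero_pow hb])
      simpa using h
    · have h2 := (HS1 y hy).div_const y
      have he : (fun n : ℕ => (((n : ℂ) + 1) * bc c (n + 1) * y ^ (n + 1)) / y)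
          = fun n : ℕ => ((n : ℂ) + 1) * bc c (n + 1) * y ^ n := by
        funext n
        rw [pow_succ]
        field_simp
      rwa [he, mul_comm y (deriv F y), mul_div_assoc, div_self hy0, mul_one] at h2
  have hODE : ∀ y : ℂ, ‖y‖ < 1 → (1 - y) * deriv F y = c * F y := by
    intro y hy
    have HSd := hderivsum y hy
    set g : ℕ → ℂ := fun m => (m : ℂ) * bc c m * y ^ m with hg
    have h4 : HasSum (fun n => g (n + 1)) (y * deriv F y) := by
      have h := HS1 y hy
      have he : (fun n : ℕ => g (n + 1)) = fun n : ℕ => ((n : ℂ) + 1) * bc c (n + 1) * y ^ (n + 1) := by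
        funext n
        simp only [hg]
        push_cast
        ring
      rwa [he]
    have hgsum : HasSum g (y * deriv F y) := by
      have := (hasSum_nat_add_iff (f := g) 1).mp h4
      simpa [hg] using this
    have hsub := HSd.sub hgsum
    have hcF := (hsum y hy).mul_left c
    have hfun : (fun n : ℕ => ((n : ℂ) + 1) * bc c (n + 1) * y ^ n - g n)
        = fun n => c * (bc c n * y ^ n) := by
      funext n
      simp only [hg]
      linear_combination y ^ n * bc_rec c n
    rw [hfun] at hsub
    have := hsub.unique hcF
    linear_combination this
  -- constancy
  have hslit : ∀ y : ℂ, ‖y‖ < 1 → (1 - y) ∈ Complex.slitPlane := by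
    intro y hy
    rw [Complex.mem_slitPlane_iff]
    left
    have : y.re ≤ ‖y‖ := by
      calc y.re ≤ |y.re| := le_abs_self _
      _ ≤ ‖y‖ := Complex.abs_re_le_norm y
      _ = ‖y‖ := rfl
    simp only [Complex.sub_re, Complex.one_re]
    linarith
  have hderiv0 : ∀ y ∈ Metric.ball (0 : ℂ) 1,
      HasDerivAt (fun y => (1 - y) ^ c * F y) 0 y := by
    intro y hy
    rw [Metric.mem_ball, dist_zero_right] at hy
    have hF' : HasDerivAt F (deriv F y) y :=
      (hFP.analyticAt_of_mem (hmem y hy)).differentiableAt.hasDerivAt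
    have hG : HasDerivAt (fun y : ℂ => (1 - y) ^ c) (c * (1 - y) ^ (c - 1) * (-1)) y :=
      HasDerivAt.cpow_const ((hasDerivAt_id y).const_sub 1) (hslit y hy)
    have h := hG.mul hF'
    refine h.congr_deriv ?_
    have h1y : (1 : ℂ) - y ≠ 0 := Complex.slitPlane_ne_zero (hslit y hy)
    have hode := hODE y hy
    have hcs : (1 - y) ^ c = (1 - y) ^ (c - 1) * (1 - y) := by
      conv_lhs => rw [show c = (c - 1) + 1 by ring]
      rw [Complex.cpow_add _ _ h1y, Complex.cpow_one]
    rw [hcs]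
    linear_combination ((1 - y) ^ (c - 1)) * hode
  have hdiffOn : DifferentiableOn ℂ (fun y => (1 - y) ^ c * F y) (Metric.ball 0 1) :=
    fun y hy => (hderiv0 y hy).differentiableAt.differentiableWithinAt
  have hfd : ∀ y ∈ Metric.ball (0 : ℂ) 1,
      fderivWithin ℂ (fun y => (1 - y) ^ c * F y) (Metric.ball 0 1) y = 0 := by
    intro y hy
    rw [fderivWithin_of_isOpen Metric.isOpen_ball hy, (hderiv0 y hy).hasFDerivAt.fderiv]
    ext x
    simp
  have hwball : w ∈ Metric.ball (0 : ℂ) 1 := by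
    rw [Metric.mem_ball, dist_zero_right]; exact hw
  have h0ball : (0 : ℂ) ∈ Metric.ball (0 : ℂ) 1 := Metric.mem_ball_self one_pos
  have hval := (convex_ball (0 : ℂ) 1).is_const_of_fderivWithin_eq_zero hdiffOn hfd hwball h0ball
  have hF0 : F 0 = 1 := by
    have h := hsum 0 (by simp)
    have h1 : HasSum (fun k : ℕ => bc c k * (0 : ℂ) ^ k) (bc c 0) := by
      have := hasSum_single (f := fun k : ℕ => bc c k * (0 : ℂ) ^ k) 0
        (by intro b hb; simp [zero_pow hb])
      simpa using this
    have := h.unique h1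
    rw [this]
    simp [bc]
  have hkey : (1 - w) ^ c * F w = 1 := by
    rw [hval]
    simp [hF0]
  have h1w : (1 : ℂ) - w ≠ 0 := Complex.slitPlane_ne_zero (hslit w hw)
  have hFw : F w = (1 - w) ^ (-c) := by
    rw [Complex.cpow_neg]
    exact eq_inv_of_mul_eq_one_right (by linear_combination hkey)
  exact hFw ▸ hsum w hw

/-- The third-coordinate function of the minimal surface lift of the harmonic shear of
the regular `n`-gon mapping (`n` even) with dilatation `ω(z) = z^n = (z^(n/2))²` is
`ψ(z) = (2 z^((n+2)/2)/(n+2))·F(1+2/n, 1/2+1/n; 3/2+1/n; z^n)`. -/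
theorem polygon_minimal_surface_lift
    (n : ℕ) (hn : 2 ≤ n) (hne : Even n) (z : ℂ) (hz : ‖z‖ < 1) :
    (∫ t in (0:ℝ)..1,
        z * (z * (t : ℂ)) ^ (n / 2) *
          ((1 : ℂ) - (z * (t : ℂ)) ^ n) ^ (-(((n : ℂ) + 2) / (n : ℂ)))) =
      (2 / ((n : ℂ) + 2)) *
        ∑' k : ℕ,
          (Polynomial.eval (1 + 2 / (n : ℂ)) (ascPochhammer ℂ k) *
              Polynomial.eval (1 / 2 + 1 / (n : ℂ)) (ascPochhammer ℂ k)) /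
            (Polynomial.eval (3 / 2 + 1 / (n : ℂ)) (ascPochhammer ℂ k) *
              (Nat.factorial k : ℂ)) * z ^ (n * k + n / 2 + 1) := by
  have hzn : ‖z‖ < 1 := hz
  have hn0' : 0 < n := by omega
  have hn0 : (n : ℂ) ≠ 0 := Nat.cast_ne_zero.2 (by omega)
  have hnR : (0 : ℝ) < n := by exact_mod_cast hn0'
  set m := n / 2 with hmdef
  have hmn : 2 * m = n := by
    obtain ⟨r, hr⟩ := hne
    omega
  have hmC : ((m : ℕ) : ℂ) = (n : ℂ) / 2 := by
    have h := congrArg (Nat.cast : ℕ → ℂ) hmn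
    push_cast at h
    field_simp
    linear_combination h
  set c : ℂ := ((n : ℂ) + 2) / (n : ℂ) with hcdef
  have hcR : c = ((((n : ℝ) + 2) / n : ℝ) : ℂ) := by rw [hcdef]; push_cast; ring
  have hcre : 0 < c.re := by
    rw [hcR, Complex.ofReal_re]
    positivity
  set b : ℂ := 1 / 2 + 1 / (n : ℂ) with hbdef
  have hbR : b = (((1 / 2 + 1 / (n : ℝ)) : ℝ) : ℂ) := by rw [hbdef]; push_cast; ring
  have hbre : 0 < b.re := by
    rw [hbR, Complex.ofReal_re]
    positivity
  have hb1re : 0 < (b + 1).re := by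
    rw [Complex.add_re, Complex.one_re]
    linarith
  clear_value c b
  -- the series terms
  set f : ℕ → ℝ → ℂ := fun k t => bc c k * z ^ (n * k + m + 1) * (t : ℂ) ^ (n * k + m)
    with hfdef
  -- pointwise expansion of the integrand
  have hzt : ∀ t : ℝ, t ∈ Set.Ioc (0:ℝ) 1 → ‖(z * (t : ℂ)) ^ n‖ < 1 := by
    intro t ht
    rw [norm_pow]
    apply pow_lt_one₀ (norm_nonneg _) _ (by omega)
    rw [norm_mul, Complex.norm_real, Real.norm_eq_abs, abs_of_pos ht.1]
    calc ‖z‖ * t ≤ ‖z‖ * 1 := by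
          apply mul_le_mul_of_nonneg_left ht.2 (norm_nonneg _)
      _ < 1 := by simpa using hzn
  have hpt : ∀ t ∈ Set.Ioc (0:ℝ) 1, HasSum (fun k => f k t)
      (z * (z * (t : ℂ)) ^ m * ((1 : ℂ) - (z * (t : ℂ)) ^ n) ^ (-c)) := by
    intro t ht
    have h := (hasSum_binom c hcre (hzt t ht)).mul_left (z * (z * (t : ℂ)) ^ m)
    have he : (fun k : ℕ => z * (z * (t : ℂ)) ^ m * (bc c k * ((z * (t : ℂ)) ^ n) ^ k))
        = fun k => f k t := by
      funext k
      rw [hfdef]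
      simp only
      rw [← pow_mul, mul_pow, mul_pow]
      ring
    rwa [he] at h
  -- integrability
  have hcont : ∀ k : ℕ, Continuous (f k) := by
    intro k
    rw [hfdef]
    exact continuous_const.mul ((Complex.continuous_ofReal).pow _)
  have hint : ∀ k, IntegrableOn (f k) (Set.Ioc (0:ℝ) 1) volume := fun k =>
    (hcont k).integrableOn_Ioc
  -- value of each integral
  have hI : ∀ k : ℕ, (∫ t in Set.Ioc (0:ℝ) 1, f k t)
      = bc c k * z ^ (n * k + m + 1) / (((n * k + m : ℕ) : ℂ) + 1) := by
    intro k
    rw [← intervalIntegral.integral_of_le zero_le_one]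
    rw [hfdef]
    simp only
    rw [intervalIntegral.integral_const_mul]
    have he : (fun t : ℝ => ((t : ℂ)) ^ (n * k + m))
        = fun t : ℝ => (((t ^ (n * k + m) : ℝ)) : ℂ) := by
      funext t; push_cast; ring
    rw [he, intervalIntegral.integral_ofReal, integral_pow]
    push_cast
    rw [one_pow, zero_pow (by omega), sub_zero]
    ring
  -- summability of integral norms
  have hratio := ratio_tendsto hcre
  set r : ℝ := (1 + ‖z‖ ^ n) / 2 with hrdef
  have hr0 : 0 < r := by
    have : (0:ℝ) ≤ ‖z‖ ^ n := by positivity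
    rw [hrdef]; linarith
  have hzr : ‖z‖ ^ n ≤ r := by
    have : ‖z‖ ^ n < 1 := pow_lt_one₀ (norm_nonneg _) hzn (by omega)
    rw [hrdef]; linarith
  have hr1 : r < 1 := by
    have : ‖z‖ ^ n < 1 := pow_lt_one₀ (norm_nonneg _) hzn (by omega)
    rw [hrdef]; linarith
  have hmaj : Summable (fun k : ℕ => ‖bc c k‖ * r ^ k) := by
    apply summable_of_ratio_test_tendsto_lt_one hr1
    · filter_upwards with k
      exact mul_ne_zero (norm_ne_zero_iff.2 (bc_ne_zero hcre k)) (pow_ne_zero _ (ne_of_gt hr0))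
    · have he : (fun k : ℕ => ‖‖bc c (k+1)‖ * r ^ (k+1)‖ / ‖‖bc c k‖ * r ^ k‖)
          = fun k : ℕ => (‖bc c (k+1)‖ / ‖bc c k‖) * r := by
        funext k
        rw [Real.norm_of_nonneg (by positivity), Real.norm_of_nonneg (by positivity)]
        have h2 : r ^ k ≠ 0 := pow_ne_zero _ (ne_of_gt hr0)
        rw [show ‖bc c (k+1)‖ * r ^ (k+1) = (‖bc c (k+1)‖ * r) * r ^ k by rw [pow_succ]; ring]
        rw [mul_div_mul_right _ _ h2, mul_div_right_comm]
      rw [he]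
      have := hratio.mul_const r
      simpa using this
  have hmaj2 : Summable (fun k : ℕ => ‖bc c k‖ * (‖z‖ ^ n) ^ k) := by
    apply Summable.of_nonneg_of_le (fun k => by positivity) _ hmaj
    intro k
    apply mul_le_mul_of_nonneg_left _ (norm_nonneg _)
    exact pow_le_pow_left₀ (by positivity) hzr k
  have hnormint : ∀ k : ℕ, (∫ t in Set.Ioc (0:ℝ) 1, ‖f k t‖)
      ≤ ‖bc c k‖ * (‖z‖ ^ n) ^ k := by
    intro k
    have he : ∀ t ∈ Set.Ioc (0:ℝ) 1,
        ‖f k t‖ = (‖bc c k‖ * ‖z‖ ^ (n * k + m + 1)) * t ^ (n * k + m) := by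
      intro t ht
      rw [hfdef]
      simp only [norm_mul, norm_pow, Complex.norm_real, Real.norm_eq_abs,
        abs_of_pos ht.1]
      try ring
    rw [setIntegral_congr_fun measurableSet_Ioc he]
    rw [← intervalIntegral.integral_of_le zero_le_one, intervalIntegral.integral_const_mul,
      integral_pow]
    rw [one_pow, zero_pow (by omega), sub_zero]
    have hb1 : (0:ℝ) < (n * k + m : ℕ) + 1 := by positivity
    calc ‖bc c k‖ * ‖z‖ ^ (n * k + m + 1) * (1 / ((n * k + m : ℕ) + 1))
        ≤ ‖bc c k‖ * ‖z‖ ^ (n * k + m + 1) * 1 := by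
          apply mul_le_mul_of_nonneg_left _ (by positivity)
          rw [div_le_one hb1]
          linarith
      _ = ‖bc c k‖ * ‖z‖ ^ (n * k + m + 1) := mul_one _
      _ ≤ ‖bc c k‖ * ‖z‖ ^ (n * k) := by
          apply mul_le_mul_of_nonneg_left _ (norm_nonneg _)
          exact pow_le_pow_of_le_one (norm_nonneg _) (le_of_lt hzn) (by omega)
      _ = ‖bc c k‖ * (‖z‖ ^ n) ^ k := by rw [← pow_mul]
  have hsummable : Summable (fun k : ℕ => ∫ t in Set.Ioc (0:ℝ) 1, ‖f k t‖) := by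
    apply Summable.of_nonneg_of_le _ hnormint hmaj2
    intro k
    positivity
  -- swap
  have hswap := MeasureTheory.integral_tsum_of_summable_integral_norm hint hsummable
  -- rewrite LHS
  rw [intervalIntegral.integral_of_le zero_le_one]
  rw [setIntegral_congr_fun measurableSet_Ioc
    (fun t ht => ((hpt t ht).tsum_eq).symm : ∀ t ∈ Set.Ioc (0:ℝ) 1,
      z * (z * (t : ℂ)) ^ m * ((1 : ℂ) - (z * (t : ℂ)) ^ n) ^ (-c) = ∑' k, f k t)]
  rw [← hswap]
  rw [tsum_congr hI]
  -- now coefficient identity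
  rw [← tsum_mul_left]
  apply tsum_congr
  intro k
  -- abbreviations
  have hc' : (1 : ℂ) + 2 / (n : ℂ) = c := by
    rw [hcdef]; field_simp
  have hb1' : (3 : ℂ) / 2 + 1 / (n : ℂ) = b + 1 := by
    rw [hbdef]; ring
  rw [hc', hb1']
  set Pc := Polynomial.eval c (ascPochhammer ℂ k) with hPc
  set Pb := Polynomial.eval b (ascPochhammer ℂ k) with hPb
  set Pb1 := Polynomial.eval (b + 1) (ascPochhammer ℂ k) with hPb1
  have hPb1ne : Pb1 ≠ 0 := poch_ne_zero hb1re k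
  have hbk : b + (k : ℂ) ≠ 0 := add_nat_ne_zero hbre k
  have hkfac : ((Nat.factorial k : ℕ) : ℂ) ≠ 0 :=
    Nat.cast_ne_zero.2 (Nat.factorial_ne_zero k)
  have hn2 : ((n : ℂ) + 2) ≠ 0 := by
    have : ((n : ℂ) + 2) = (((n : ℝ) + 2 : ℝ) : ℂ) := by push_cast; ring
    rw [this]
    exact_mod_cast ne_of_gt (by positivity : (0:ℝ) < (n:ℝ) + 2)
  -- key Pochhammer identity
  have key : Pb * (b + k) = b * Pb1 := by
    have h1 : Polynomial.eval b (ascPochhammer ℂ (k + 1)) = Pb * (b + k) :=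
      ascPochhammer_succ_eval k b
    have h2 : Polynomial.eval b (ascPochhammer ℂ (k + 1)) = b * Pb1 := by
      rw [ascPochhammer_succ_left]
      simp [Polynomial.eval_comp, hPb1]
    rw [← h1, h2]
  have hPbdiv : Pb / Pb1 = b / (b + k) := by
    rw [div_eq_div_iff hPb1ne hbk]
    linear_combination key
  have hN : (((n * k + m : ℕ) : ℂ) + 1) = (n : ℂ) * (b + k) := by
    push_cast
    rw [hmC, hbdef]
    field_simp
    ring
  have hNne : (((n * k + m : ℕ) : ℂ) + 1) ≠ 0 := by
    rw [hN]
    exact mul_ne_zero hn0 hbk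
  rw [hN]
  simp only [bc]
  have hfrac : 1 / ((n : ℂ) * (b + (k : ℂ))) = 2 / ((n : ℂ) + 2) * (b / (b + (k : ℂ))) := by
    have h3 : 2 / ((n : ℂ) + 2) * (b / (b + (k : ℂ))) = (2 * b) / (((n : ℂ) + 2) * (b + (k : ℂ))) :=
      div_mul_div_comm 2 ((n : ℂ) + 2) b (b + (k : ℂ))
    have h4 : (2 : ℂ) * b * (n : ℂ) = (n : ℂ) + 2 := by
      rw [hbdef]
      field_simp
    rw [h3, div_eq_div_iff (mul_ne_zero hn0 hbk) (mul_ne_zero hn2 hbk)]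
    linear_combination (-(b + (k : ℂ))) * h4
  calc Polynomial.eval c (ascPochhammer ℂ k) / (Nat.factorial k : ℂ) * z ^ (n * k + m + 1)
        / ((n : ℂ) * (b + (k : ℂ)))
      = Polynomial.eval c (ascPochhammer ℂ k) / (Nat.factorial k : ℂ) * z ^ (n * k + m + 1)
        * (1 / ((n : ℂ) * (b + (k : ℂ)))) := by ring
    _ = Polynomial.eval c (ascPochhammer ℂ k) / (Nat.factorial k : ℂ) * z ^ (n * k + m + 1)
        * (2 / ((n : ℂ) + 2) * (Pb / Pb1)) := by rw [hfrac, ← hPbdiv]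
    _ = 2 / ((n : ℂ) + 2) * (Polynomial.eval c (ascPochhammer ℂ k) * Pb
        / (Pb1 * (Nat.factorial k : ℂ)) * z ^ (n * k + m + 1)) := by ring
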